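/- Let Compress_SR be the LZ77 compression function with self-referencing and unbounded sliding window size W = n over a finite alphabet Σ. Then the global sensitivity for strings of length n satisfies GS ≤ ((∛9/2)·n^{2/3} + (∛3/2)·n^{1/3} + 3)·(2⌈log₂ n⌉ + ⌈log₂|Σ|⌉). -/

import Mathlib

/-- A single LZ77 block `[q, len, c]`. -/
structure LZBlock (α : Type*) where
  q : ℕ
  len : ℕ
  c : α

/-- `s_i` (1-indexed start position of the `i`-th block, `i` 0-indexed). -/
def blockStart {α : Type*} (B : List (LZBlock α)) (i : ℕ) : ℕ :=
  1 + ((B.take i).map (fun b => b.len + 1)).sum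

/-- `f_i` (1-indexed final position of the `i`-th block, `i` 0-indexed). -/
def blockFin {α : Type*} (B : List (LZBlock α)) (i : ℕ) : ℕ :=
  ((B.take (i + 1)).map (fun b => b.len + 1)).sum

/-- `ℓ_i`, recovered as `f_i - s_i`. -/
def lenAt {α : Type*} (B : List (LZBlock α)) (i : ℕ) : ℕ :=
  blockFin B i - blockStart B i

/-- Non-overlapping LZ77 parse, sliding window `W`, of the length-`n` string `w`
(1-indexed positions). -/
def IsLZ77Parse {α : Type*} (W n : ℕ) (w : ℕ → α) (B : List (LZBlock α)) : Prop :=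
  ((B.map (fun b => b.len + 1)).sum = n) ∧
  ∀ i : Fin B.length,
    ((B.get i).c = w (blockStart B i.1 + (B.get i).len)) ∧
    ((B.get i).len = 0 → (B.get i).q = 0) ∧
    (0 < (B.get i).len →
      1 ≤ (B.get i).q ∧
      blockStart B i.1 ≤ (B.get i).q + W ∧
      (B.get i).q + (B.get i).len ≤ blockStart B i.1 ∧
      ∀ d < (B.get i).len, w ((B.get i).q + d) = w (blockStart B i.1 + d)) ∧
    (blockStart B i.1 + (B.get i).len + 1 ≤ n →
      ¬ ∃ q', 1 ≤ q' ∧ blockStart B i.1 ≤ q' + W ∧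
          q' + (B.get i).len + 1 ≤ blockStart B i.1 ∧
          ∀ d ≤ (B.get i).len, w (q' + d) = w (blockStart B i.1 + d))

/-- LZ77 parse with self-referencing (unbounded window). -/
def IsLZ77SRParse {α : Type*} (n : ℕ) (w : ℕ → α) (B : List (LZBlock α)) : Prop :=
  ((B.map (fun b => b.len + 1)).sum = n) ∧
  ∀ i : Fin B.length,
    ((B.get i).c = w (blockStart B i.1 + (B.get i).len)) ∧
    ((B.get i).len = 0 → (B.get i).q = 0) ∧
    (0 < (B.get i).len →
      1 ≤ (B.get i).q ∧
      (B.get i).q < blockStart B i.1 ∧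
      ∀ d < (B.get i).len, w ((B.get i).q + d) = w (blockStart B i.1 + d)) ∧
    (blockStart B i.1 + (B.get i).len + 1 ≤ n →
      ¬ ∃ q', 1 ≤ q' ∧ q' < blockStart B i.1 ∧
          ∀ d ≤ (B.get i).len, w (q' + d) = w (blockStart B i.1 + d))

/-- `w ∼ w'`: strings of length `n` differing in exactly one position. -/
def Neighbor {α : Type*} (n : ℕ) (w w' : ℕ → α) : Prop :=
  ∃ j, 1 ≤ j ∧ j ≤ n ∧ w j ≠ w' j ∧ ∀ i, i ≠ j → w i = w' i

/-- `M_i`: the set of (0-indexed) blocks of `B'` that start inside block `i` of `B`. -/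
def Mset {α : Type*} (B B' : List (LZBlock α)) (i : ℕ) : Finset ℕ :=
  (Finset.range B'.length).filter
    (fun k => blockStart B i ≤ blockStart B' k ∧ blockStart B' k ≤ blockFin B i)

/-- Indices of type-`m` blocks of `B` (relative to `B'`). -/
def typeSet {α : Type*} (B B' : List (LZBlock α)) (m : ℕ) : Finset ℕ :=
  (Finset.range B.length).filter (fun i => (Mset B B' i).card = m)

/-- Number of bits used to encode each block. -/
def codeLen (n cardS : ℕ) : ℕ :=
  2 * Nat.clog 2 n + Nat.clog 2 cardS

namespace LZaux
open Finset

variable {α : Type*}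

lemma sum_take_succ' (B : List (LZBlock α)) {i : ℕ} (h : i < B.length) :
    ((B.take (i+1)).map (fun b => b.len + 1)).sum
      = ((B.take i).map (fun b => b.len + 1)).sum + ((B.get ⟨i, h⟩).len + 1) := by
  have := List.sum_take_succ (B.map (fun b => b.len + 1)) i (by simpa using h)
  rw [← List.map_take, ← List.map_take] at this
  rw [this]
  congr 1
  rw [List.getElem_map]
  rfl

lemma bf_eq (B : List (LZBlock α)) {i : ℕ} (h : i < B.length) :
    blockFin B i = blockStart B i + (B.get ⟨i, h⟩).len := by
  unfold blockFin blockStart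
  rw [sum_take_succ' B h]; omega

lemma bs_succ (B : List (LZBlock α)) (i : ℕ) :
    blockStart B (i + 1) = blockFin B i + 1 := by
  unfold blockStart blockFin; omega

lemma lenAt_eq (B : List (LZBlock α)) {i : ℕ} (h : i < B.length) :
    lenAt B i = (B.get ⟨i, h⟩).len := by
  unfold lenAt; rw [bf_eq B h]; omega

lemma bf_ge_bs (B : List (LZBlock α)) {i : ℕ} (h : i < B.length) :
    blockStart B i ≤ blockFin B i := by rw [bf_eq B h]; omega

lemma bf_eq' (B : List (LZBlock α)) {i : ℕ} (h : i < B.length) :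
    blockFin B i = blockStart B i + lenAt B i := by
  rw [lenAt_eq B h, bf_eq B h]

lemma bs_mono (B : List (LZBlock α)) : Monotone (blockStart B) := by
  apply monotone_nat_of_le_succ
  intro i
  rw [bs_succ]
  unfold blockStart blockFin
  rcases le_or_gt B.length i with h | h
  · rw [List.take_of_length_le h, List.take_of_length_le (by omega)]; omega
  · rw [sum_take_succ' B h]; omega

lemma bs_succ_ge (B : List (LZBlock α)) {i : ℕ} (h : i < B.length) :
    blockStart B i + (lenAt B i + 1) = blockStart B (i+1) := by
  rw [bs_succ, bf_eq' B h]; omega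

lemma bs_strictmono (B : List (LZBlock α)) {i k : ℕ} (hik : i < k) (h : i < B.length) :
    blockStart B i < blockStart B k := by
  have h1 : blockStart B i < blockStart B (i+1) := by
    rw [← bs_succ_ge B h]; omega
  exact lt_of_lt_of_le h1 (bs_mono B hik)

lemma one_le_bs (B : List (LZBlock α)) (i : ℕ) : 1 ≤ blockStart B i := by
  unfold blockStart; omega

section n
variable {n : ℕ} {B : List (LZBlock α)}
  (hsum : ((B.map (fun b => b.len + 1)).sum = n))
include hsum

lemma bs_total : blockStart B B.length = n + 1 := by
  unfold blockStart; rw [List.take_length, hsum]; omega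

lemma bs_le_n {i : ℕ} (h : i < B.length) : blockStart B i ≤ n := by
  have h1 := bs_strictmono B (show i < B.length from h) h
  rw [bs_total hsum] at h1; omega

lemma bf_le_n {i : ℕ} (h : i < B.length) : blockFin B i ≤ n := by
  have := bs_succ B i
  have h2 : blockStart B (i+1) ≤ n + 1 := by
    rw [← bs_total hsum]; exact bs_mono B (by omega)
  omega

lemma length_pos (hn : 1 ≤ n) : 0 < B.length := by
  rcases B with _ | ⟨b, L⟩
  · simp at hsum; omega
  · simp

/-- every position in `[1,n]` lies in some block -/
lemma locate {p : ℕ} (hp1 : 1 ≤ p) (hpn : p ≤ n) :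
    ∃ i, i < B.length ∧ blockStart B i ≤ p ∧ p ≤ blockFin B i := by
  have hlen : 0 < B.length := length_pos hsum (le_trans hp1 hpn)
  classical
  set S : Finset ℕ := (range B.length).filter (fun i => blockStart B i ≤ p) with hS
  have h0 : 0 ∈ S := by
    simp [hS, hlen]
    unfold blockStart; simpa using hp1
  have hne : S.Nonempty := ⟨0, h0⟩
  set i := S.max' hne with hi
  have hiS : i ∈ S := S.max'_mem hne
  simp only [hS, mem_filter, mem_range] at hiS
  refine ⟨i, hiS.1, hiS.2, ?_⟩
  by_contra hcon
  push_neg at hcon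
  have hnext : blockStart B (i+1) ≤ p := by rw [bs_succ]; omega
  rcases lt_or_ge (i+1) B.length with hl | hl
  · have : i + 1 ∈ S := by simp [hS, hl, hnext]
    have := S.le_max' _ this
    omega
  · have : blockStart B (i+1) = n + 1 := by
      have h1 : blockStart B B.length ≤ blockStart B (i+1) := bs_mono B hl
      have h2 : blockStart B (i+1) ≤ blockStart B B.length := bs_mono B (by omega)
      rw [bs_total hsum] at h1 h2; omega
    omega

omit hsum in
lemma locate_unique {p : ℕ} {i k : ℕ} (hi : i < B.length)
    (h1 : blockStart B i ≤ p) (h2 : p ≤ blockFin B i)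
    (h3 : blockStart B k ≤ p) (h4 : p ≤ blockFin B k) : i = k := by
  by_contra hne
  rcases Nat.lt_or_ge i k with h | h
  · have := bs_strictmono B (show i + 1 ≤ k from h) (show i < B.length from hi)
    have h5 : blockStart B (i+1) ≤ blockStart B k := bs_mono B (by omega)
    rw [bs_succ] at h5; omega
  · have h' : k < i := by omega
    have h5 : blockStart B (k+1) ≤ blockStart B i := bs_mono B (by omega)
    rw [bs_succ] at h5; omega

lemma sum_lenAt : ∑ k ∈ range B.length, (lenAt B k + 1) = n := by
  have key : ∀ m, m ≤ B.length → ∑ k ∈ range m, (lenAt B k + 1) = blockStart B m - 1 := by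
    intro m
    induction m with
    | zero => intro _; simp [blockStart]
    | succ m ih =>
      intro hm
      rw [Finset.sum_range_succ, ih (by omega), ← bs_succ_ge B (by omega)]
      have := one_le_bs B m
      omega
  have := key B.length le_rfl
  rw [bs_total hsum] at this
  omega

end n


lemma aux3 (M : ℕ) : 3 * ∑ m ∈ Finset.range M, ((m:ℤ)*(m+1)) = (M:ℤ)^3 - M := by
  induction M with
  | zero => simp
  | succ M ih =>
    rw [Finset.sum_range_succ, mul_add, ih]
    push_cast
    ring

lemma count_lem (n : ℕ) (hn : 1 ≤ n) (F : Finset ℕ) (d v : ℕ → ℕ)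
    (hdv : ∀ k ∈ F, d k < v k)
    (hinj : ∀ k1 ∈ F, ∀ k2 ∈ F, d k1 = d k2 → v k1 = v k2 → k1 = k2)
    (hsum : ∑ k ∈ F, v k ≤ n) :
    (F.card : ℝ) ≤ (9:ℝ)^((1:ℝ)/3)/2 * (n:ℝ)^((2:ℝ)/3)
      + (3:ℝ)^((1:ℝ)/3)/2 * (n:ℝ)^((1:ℝ)/3) := by
  classical
  -- Step 1 : few elements with small v
  have step1 : ∀ m : ℕ, 2 * (F.filter (fun k => v k ≤ m)).card ≤ m * (m+1) := by
    intro m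
    have hcard : (F.filter (fun k => v k ≤ m)).card
        ≤ ((Finset.range (m+1)).sigma (fun x => Finset.range x)).card := by
      apply Finset.card_le_card_of_injOn (fun k => (⟨v k, d k⟩ : Σ _ : ℕ, ℕ))
      · intro k hk
        simp only [Finset.mem_coe, Finset.mem_filter] at hk
        simp only [Finset.mem_coe, Finset.mem_sigma, Finset.mem_range]
        exact ⟨by omega, hdv k hk.1⟩
      · intro k1 h1 k2 h2 he
        simp only [Finset.mem_coe, Finset.mem_filter] at h1 h2
        have hv : v k1 = v k2 := congrArg Sigma.fst he
        have hd : d k1 = d k2 := eq_of_heq (Sigma.mk.inj_iff.mp he).2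
        exact hinj k1 h1.1 k2 h2.1 hd hv
    rw [Finset.card_sigma] at hcard
    simp only [Finset.card_range] at hcard
    have hg : (∑ a ∈ Finset.range (m+1), a) * 2 = (m+1) * m :=
      Finset.sum_range_id_mul_two (m+1)
    have h2e : 2 * (F.filter (fun k => v k ≤ m)).card
        ≤ (∑ a ∈ Finset.range (m+1), a) * 2 := by omega
    rw [hg] at h2e
    exact le_of_le_of_eq h2e (Nat.mul_comm (m+1) m)
  -- layer cake
  have layer : ∀ M : ℕ, ∑ m ∈ Finset.range M, (F.filter (fun k => m < v k)).card
      ≤ ∑ k ∈ F, v k := by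
    intro M
    have hrw : ∀ m, (F.filter (fun k => m < v k)).card
        = ∑ k ∈ F, (if m < v k then 1 else 0) := by
      intro m; rw [Finset.card_filter]
    simp only [hrw]
    rw [Finset.sum_comm]
    apply Finset.sum_le_sum
    intro k _
    have hrw2 : ∑ m ∈ Finset.range M, (if m < v k then 1 else 0)
        = ((Finset.range M).filter (fun m => m < v k)).card := by
      rw [Finset.card_filter]
    rw [hrw2]
    calc ((Finset.range M).filter (fun m => m < v k)).card
        ≤ (Finset.range (v k)).card := by
          apply Finset.card_le_card
          intro m hm
          simp only [Finset.mem_filter, Finset.mem_range] at hm ⊢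
          exact hm.2
      _ = v k := Finset.card_range _
  -- step2 : integer inequality
  have step2 : ∀ M : ℕ, 6 * ((M:ℤ) * F.card) ≤ 6 * n + (M:ℤ)^3 := by
    intro M
    have per : ∀ m, 2 * F.card ≤ 2 * (F.filter (fun k => m < v k)).card + m * (m+1) := by
      intro m
      have hsplit := Finset.card_filter_add_card_filter_not
        (s := F) (p := fun k => v k ≤ m)
      have h1 := step1 m
      have heq : (Finset.filter (fun k => ¬ v k ≤ m) F).card
          = (Finset.filter (fun k => m < v k) F).card := by
        congr 1
        ext k
        simp [Nat.not_le]
      omega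
    have hsum2 : 2 * (M * F.card) ≤ 2 * n + ∑ m ∈ Finset.range M, m * (m+1) := by
      calc 2 * (M * F.card) = ∑ _m ∈ Finset.range M, 2 * F.card := by
            simp [Finset.sum_const, Finset.card_range]; ring
        _ ≤ ∑ m ∈ Finset.range M, (2 * (F.filter (fun k => m < v k)).card + m * (m+1)) :=
            Finset.sum_le_sum (fun m _ => per m)
        _ = 2 * (∑ m ∈ Finset.range M, (F.filter (fun k => m < v k)).card)
            + ∑ m ∈ Finset.range M, m * (m+1) := by
            rw [Finset.sum_add_distrib, Finset.mul_sum]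
        _ ≤ 2 * n + ∑ m ∈ Finset.range M, m * (m+1) := by
            have h2 : (∑ m ∈ Finset.range M, (F.filter (fun k => m < v k)).card) ≤ n :=
              le_trans (layer M) hsum
            omega
    have hz : (2:ℤ) * ((M:ℤ) * F.card) ≤ 2 * n + ∑ m ∈ Finset.range M, ((m:ℤ) * (m+1)) := by
      zify at hsum2
      push_cast at hsum2 ⊢
      convert hsum2 using 2
    have h3 := aux3 M
    nlinarith [hz, h3]
  -- step 3 : real arithmetic
  set x : ℝ := ((3*n : ℕ) : ℝ) ^ ((1:ℝ)/3) with hxdef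
  have h3n : ((3*n : ℕ) : ℝ) = 3 * (n:ℝ) := by push_cast; ring
  have h3npos : (0:ℝ) < ((3*n : ℕ) : ℝ) := by
    rw [h3n]; positivity
  have hxpos : 0 < x := Real.rpow_pos_of_pos h3npos _
  have hn1 : (1:ℝ) ≤ (n:ℝ) := by exact_mod_cast hn
  have hx1 : (1:ℝ) ≤ x := by
    apply Real.one_le_rpow (by rw [h3n]; linarith) (by norm_num)
  have hx3 : x ^ (3:ℕ) = 3 * n := by
    rw [hxdef, ← Real.rpow_natCast (((3*n : ℕ) : ℝ) ^ ((1:ℝ)/3)) 3,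
      ← Real.rpow_mul (le_of_lt h3npos)]
    norm_num [h3n]
  set M : ℕ := ⌈x⌉₊ with hMdef
  have hxM : x ≤ (M:ℝ) := Nat.le_ceil x
  have hM1 : (M:ℝ) < x + 1 := Nat.ceil_lt_add_one (le_of_lt hxpos)
  have hstep := step2 M
  have hstepR : 6 * ((M:ℝ) * F.card) ≤ 6 * n + (M:ℝ)^3 := by exact_mod_cast hstep
  have hEx : (F.card : ℝ) ≤ x^2/2 + x/2 := by
    have hMpos : (0:ℝ) < M := lt_of_lt_of_le (by linarith) hxM
    have hEnn : (0:ℝ) ≤ F.card := Nat.cast_nonneg _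
    nlinarith [hstepR, hxM, hM1, hx1, hEnn, hMpos, hx3,
      mul_le_mul_of_nonneg_left hxM (le_of_lt hMpos),
      sq_nonneg ((M:ℝ) - x), sq_nonneg ((M:ℝ) + x)]
  -- identities
  have hns : (0:ℝ) ≤ (n:ℝ) := Nat.cast_nonneg n
  have hxsplit : x = (3:ℝ)^((1:ℝ)/3) * (n:ℝ)^((1:ℝ)/3) := by
    rw [hxdef, h3n, Real.mul_rpow (by norm_num) hns]
  have hx2 : x^2 = (9:ℝ)^((1:ℝ)/3) * (n:ℝ)^((2:ℝ)/3) := by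
    rw [hxsplit, mul_pow, ← Real.rpow_natCast ((3:ℝ)^((1:ℝ)/3)) 2,
      ← Real.rpow_natCast ((n:ℝ)^((1:ℝ)/3)) 2,
      ← Real.rpow_mul (by norm_num : (0:ℝ) ≤ 3), ← Real.rpow_mul hns]
    norm_num
    have h9 : (9:ℝ) = (3:ℝ)^(2:ℕ) := by norm_num
    rw [h9, ← Real.rpow_natCast (3:ℝ) 2, ← Real.rpow_mul (by norm_num : (0:ℝ) ≤ 3)]
    norm_num
  rw [hx2] at hEx
  rw [hxsplit] at hEx
  linarith [hEx]

lemma t'_le {α : Type*} (n : ℕ) (w w' : ℕ → α) (j : ℕ) (hj1 : 1 ≤ j) (hjn : j ≤ n)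
    (hdiff : ∀ x, x ≠ j → w x = w' x)
    (B B' : List (LZBlock α)) (hB : IsLZ77SRParse n w B) (hB' : IsLZ77SRParse n w' B') :
    (B'.length : ℝ) ≤ (B.length : ℝ) +
      ((9:ℝ)^((1:ℝ)/3)/2 * (n:ℝ)^((2:ℝ)/3) + (3:ℝ)^((1:ℝ)/3)/2 * (n:ℝ)^((1:ℝ)/3) + 1) := by
  classical
  have hn : 1 ≤ n := le_trans hj1 hjn
  -- the potential "extra" starts : both phrase k and phrase k+1 of B' start in a block of B
  set P : ℕ → Prop := fun k => ∃ i, i < B.length ∧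
      blockStart B i ≤ blockStart B' k ∧ blockStart B' (k+1) ≤ blockFin B i with hPdef
  set X : Finset ℕ := (Finset.range (B'.length - 1)).filter P with hXdef
  set qA : ℕ → ℕ := fun i => if h : i < B.length then (B.get ⟨i, h⟩).q else 0 with hqAdef
  set iw : ℕ → ℕ := fun k => if h : P k then h.choose else 0 with hiwdef
  set r : ℕ → ℕ := fun k => qA (iw k) + (blockStart B' k - blockStart B (iw k)) with hrdef
  have hiw : ∀ k, P k → iw k < B.length ∧ blockStart B (iw k) ≤ blockStart B' k ∧
      blockStart B' (k+1) ≤ blockFin B (iw k) := by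
    intro k hPk
    have : iw k = hPk.choose := by rw [hiwdef]; simp [dif_pos hPk]
    rw [this]
    exact hPk.choose_spec
  have hXmem : ∀ k ∈ X, k + 1 < B'.length ∧ P k := by
    intro k hk
    rw [hXdef, Finset.mem_filter, Finset.mem_range] at hk
    exact ⟨by omega, hk.2⟩
  -- the master lemma about an extra start
  have master : ∀ k ∈ X, r k < blockStart B' k ∧
      (∀ x ≤ lenAt B' k, w (r k + x) = w (blockStart B' k + x)) ∧
      (∃ dd, dd ≤ lenAt B' k ∧ (r k + dd = j ∨ blockStart B' k + dd = j)) := by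
    intro k hk
    obtain ⟨hk1, hPk⟩ := hXmem k hk
    have hk0 : k < B'.length := by omega
    obtain ⟨hi, hs, hf⟩ := hiw k hPk
    have hbsucc : blockStart B' k + (lenAt B' k + 1) = blockStart B' (k+1) :=
      bs_succ_ge B' hk0
    have hbf : blockFin B (iw k) = blockStart B (iw k) + lenAt B (iw k) := bf_eq' B hi
    have hlB : (blockStart B' k - blockStart B (iw k)) + lenAt B' k + 1 ≤ lenAt B (iw k) := by
      omega
    have hpos : 0 < lenAt B (iw k) := by omega
    have hlenL : (B.get ⟨iw k, hi⟩).len = lenAt B (iw k) := (lenAt_eq B hi).symm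
    have hqA : qA (iw k) = (B.get ⟨iw k, hi⟩).q := by rw [hqAdef]; simp [dif_pos hi]
    obtain ⟨hq1, hq2, copy⟩ := (hB.2 ⟨iw k, hi⟩).2.2.1 (by omega)
    have hfix1 : blockStart B ((⟨iw k, hi⟩ : Fin B.length) : ℕ) = blockStart B (iw k) := rfl
    rw [hfix1] at hq2 copy
    have hrk : r k = (B.get ⟨iw k, hi⟩).q + (blockStart B' k - blockStart B (iw k)) := by
      rw [hrdef]; simp [hqA]
    have goal1 : r k < blockStart B' k := by omega
    have goal2 : ∀ x ≤ lenAt B' k, w (r k + x) = w (blockStart B' k + x) := by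
      intro x hx
      have hcp := copy ((blockStart B' k - blockStart B (iw k)) + x) (by omega)
      have e1 : (B.get ⟨iw k, hi⟩).q + ((blockStart B' k - blockStart B (iw k)) + x)
          = r k + x := by omega
      have e2 : blockStart B (iw k) + ((blockStart B' k - blockStart B (iw k)) + x)
          = blockStart B' k + x := by omega
      rw [e1, e2] at hcp
      exact hcp
    refine ⟨goal1, goal2, ?_⟩
    have hlenL' : (B'.get ⟨k, hk0⟩).len = lenAt B' k := (lenAt_eq B' hk0).symm
    have hmax := (hB'.2 ⟨k, hk0⟩).2.2.2
    have hpre : blockStart B' k + (B'.get ⟨k, hk0⟩).len + 1 ≤ n := by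
      have hfn : blockFin B (iw k) ≤ n := bf_le_n hB.1 hi
      omega
    have hnomax := hmax hpre
    by_contra hcon
    push_neg at hcon
    exact hnomax ⟨r k, by omega, goal1, by
      intro dd hdd
      have hdd' : dd ≤ lenAt B' k := by omega
      have hne1 : r k + dd ≠ j := (hcon dd hdd').1
      have hne2 : blockStart B' k + dd ≠ j := (hcon dd hdd').2
      calc w' (r k + dd) = w (r k + dd) := (hdiff _ hne1).symm
        _ = w (blockStart B' k + dd) := goal2 dd hdd'
        _ = w' (blockStart B' k + dd) := hdiff _ hne2⟩
  -- Step A : B'.length ≤ B.length + X.card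
  set g : ℕ → ℕ := fun k => if h : ∃ i, i < B.length ∧ blockStart B i ≤ blockStart B' k ∧
      blockStart B' k ≤ blockFin B i then h.choose else 0 with hgdef
  have hg : ∀ k, k < B'.length → g k < B.length ∧ blockStart B (g k) ≤ blockStart B' k ∧
      blockStart B' k ≤ blockFin B (g k) := by
    intro k hk
    have hexk : ∃ i, i < B.length ∧ blockStart B i ≤ blockStart B' k ∧
        blockStart B' k ≤ blockFin B i :=
      locate hB.1 (one_le_bs B' k) (bs_le_n hB'.1 hk)
    have : g k = hexk.choose := by rw [hgdef]; simp [dif_pos hexk]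
    rw [this]
    exact hexk.choose_spec
  have stepA : B'.length ≤ B.length + X.card := by
    set Y : Finset ℕ := (Finset.range B'.length) \ (X.image (· + 1)) with hYdef
    have himsub : X.image (· + 1) ⊆ Finset.range B'.length := by
      intro y hy
      obtain ⟨k, hkX, rfl⟩ := Finset.mem_image.mp hy
      have := (hXmem k hkX).1
      simp only [Finset.mem_range]
      omega
    have hYcard : Y.card = B'.length - X.card := by
      rw [hYdef, Finset.card_sdiff_of_subset himsub, Finset.card_range,
        Finset.card_image_of_injective _ (add_left_injective 1)]
    have hkey : ∀ k1 ∈ Y, ∀ k2 ∈ Y, k1 < k2 → g k1 ≠ g k2 := by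
      intro k1 h1 k2 h2 hlt heq
      rw [hYdef, Finset.mem_sdiff, Finset.mem_range] at h1 h2
      apply h2.2
      refine Finset.mem_image.mpr ⟨k2 - 1, ?_, by omega⟩
      rw [hXdef, Finset.mem_filter, Finset.mem_range]
      have hk21 : k2 - 1 + 1 = k2 := by omega
      refine ⟨by omega, g k1, (hg k1 h1.1).1, ?_, ?_⟩
      · exact le_trans (hg k1 h1.1).2.1 (bs_mono B' (by omega))
      · rw [hk21, heq]
        exact (hg k2 h2.1).2.2
    have hinjY : Set.InjOn g Y := by
      intro a ha b hb hab
      by_contra hne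
      rcases lt_trichotomy a b with h | h | h
      · exact hkey a ha b hb h hab
      · exact hne h
      · exact hkey b hb a ha h hab.symm
    have hYle : Y.card ≤ (Finset.range B.length).card := by
      apply Finset.card_le_card_of_injOn g ?_ hinjY
      intro k hk
      simp only [Finset.mem_coe, hYdef, Finset.mem_sdiff, Finset.mem_range] at hk
      exact Finset.mem_range.mpr (hg k hk.1).1
    rw [Finset.card_range] at hYle
    omega
  -- Step B : at most one extra with start ≤ j
  set X' : Finset ℕ := X.filter (fun k => j < blockStart B' k) with hX'def
  have hX'sub : X' ⊆ X := Finset.filter_subset _ _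
  have hjump : ∀ k ∈ X, ¬ j < blockStart B' k → j < blockStart B' (k+1) := by
    intro k hk hble
    push_neg at hble
    obtain ⟨hrlt, _, dd, hdd, hor⟩ := master k hk
    have hk0 : k < B'.length := by have := (hXmem k hk).1; omega
    have hbsucc : blockStart B' k + (lenAt B' k + 1) = blockStart B' (k+1) :=
      bs_succ_ge B' hk0
    rcases hor with h | h <;> omega
  have hsingle : (X.filter (fun k => ¬ j < blockStart B' k)).card ≤ 1 := by
    rw [Finset.card_le_one]
    intro a ha b hb
    rw [Finset.mem_filter] at ha hb
    by_contra hne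
    have key : ∀ a b, a ∈ X → ¬ j < blockStart B' a → b ∈ X → ¬ j < blockStart B' b →
        a < b → False := by
      intro a b haX haj hbX hbj hab
      have h1 := hjump a haX haj
      have h2 : blockStart B' (a+1) ≤ blockStart B' b := bs_mono B' (by omega)
      omega
    rcases lt_trichotomy a b with h | h | h
    · exact key a b ha.1 ha.2 hb.1 hb.2 h
    · exact hne h
    · exact key b a hb.1 hb.2 ha.1 ha.2 h
  have stepB : X.card ≤ X'.card + 1 := by
    have := Finset.card_filter_add_card_filter_not
      (s := X) (p := fun k => j < blockStart B' k)
    rw [hX'def]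
    omega
  -- properties of the extras with start > j
  have typeR : ∀ k ∈ X', r k ≤ j ∧ j - r k ≤ lenAt B' k := by
    intro k hk
    rw [hX'def, Finset.mem_filter] at hk
    obtain ⟨hrlt, _, dd, hdd, hor⟩ := master k hk.1
    rcases hor with h | h
    · omega
    · omega
  have heal : ∀ k1 ∈ X', ∀ k2 ∈ X', k1 < k2 → r k1 = r k2 → lenAt B' k1 < lenAt B' k2 := by
    intro k1 hk1' k2 hk2' hlt hreq
    have hk1X := hX'sub hk1'
    have hk2X := hX'sub hk2'
    rw [hX'def, Finset.mem_filter] at hk1' hk2'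
    obtain ⟨_, copy1, _⟩ := master k1 hk1X
    obtain ⟨_, copy2, _⟩ := master k2 hk2X
    by_contra hcon
    push_neg at hcon
    obtain ⟨hk21, hPk2⟩ := hXmem k2 hk2X
    have hk20 : k2 < B'.length := by omega
    have hk10 : k1 < B'.length := by have := (hXmem k1 hk1X).1; omega
    obtain ⟨hi2, hs2, hf2⟩ := hiw k2 hPk2
    have hbsucc2 : blockStart B' k2 + (lenAt B' k2 + 1) = blockStart B' (k2+1) :=
      bs_succ_ge B' hk20
    have hlenL2 : (B'.get ⟨k2, hk20⟩).len = lenAt B' k2 := (lenAt_eq B' hk20).symm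
    have hmax := (hB'.2 ⟨k2, hk20⟩).2.2.2
    have hpre : blockStart B' k2 + (B'.get ⟨k2, hk20⟩).len + 1 ≤ n := by
      have hfn : blockFin B (iw k2) ≤ n := bf_le_n hB.1 hi2
      omega
    apply hmax hpre
    refine ⟨blockStart B' k1, one_le_bs B' k1, bs_strictmono B' hlt hk10, ?_⟩
    intro dd hdd
    have hdd2 : dd ≤ lenAt B' k2 := by omega
    have hdd1 : dd ≤ lenAt B' k1 := by omega
    have hne1 : blockStart B' k1 + dd ≠ j := by have := hk1'.2; omega
    have hne2 : blockStart B' k2 + dd ≠ j := by have := hk2'.2; omega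
    calc w' (blockStart B' k1 + dd) = w (blockStart B' k1 + dd) := (hdiff _ hne1).symm
      _ = w (r k1 + dd) := (copy1 dd hdd1).symm
      _ = w (r k2 + dd) := by rw [hreq]
      _ = w (blockStart B' k2 + dd) := copy2 dd hdd2
      _ = w' (blockStart B' k2 + dd) := hdiff _ hne2
  -- Step C : counting the extras with start > j
  have hsumX : ∑ k ∈ X', (lenAt B' k + 1) ≤ n := by
    have hsub : X' ⊆ Finset.range B'.length := by
      intro k hk
      have := (hXmem k (hX'sub hk)).1
      exact Finset.mem_range.mpr (by omega)
    calc ∑ k ∈ X', (lenAt B' k + 1) ≤ ∑ k ∈ Finset.range B'.length, (lenAt B' k + 1) :=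
          Finset.sum_le_sum_of_subset hsub
      _ = n := sum_lenAt hB'.1
  have hC : (X'.card : ℝ) ≤ (9:ℝ)^((1:ℝ)/3)/2 * (n:ℝ)^((2:ℝ)/3)
      + (3:ℝ)^((1:ℝ)/3)/2 * (n:ℝ)^((1:ℝ)/3) := by
    apply count_lem n hn X' (fun k => j - r k) (fun k => lenAt B' k + 1) ?_ ?_ hsumX
    · intro k hk
      have := (typeR k hk).2
      show j - r k < lenAt B' k + 1
      omega
    · intro k1 hk1 k2 hk2 hdeq hveq
      have h1 := typeR k1 hk1
      have h2 := typeR k2 hk2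
      have hre : r k1 = r k2 := by omega
      have hle : lenAt B' k1 = lenAt B' k2 := by omega
      by_contra hne
      rcases lt_trichotomy k1 k2 with h | h | h
      · have := heal k1 hk1 k2 hk2 h hre
        omega
      · exact hne h
      · have := heal k2 hk2 k1 hk1 h hre.symm
        omega
  -- put everything together
  have h1 : (B'.length : ℝ) ≤ (B.length : ℝ) + X.card := by exact_mod_cast stepA
  have h2 : (X.card : ℝ) ≤ (X'.card : ℝ) + 1 := by exact_mod_cast stepB
  linarith

end LZaux

/-- Theorem: upper bound on the global sensitivity of LZ77 with
self-referencing, `W = n`. Over a finite alphabet `Σ`, for every pair of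
neighboring strings `w ∼ w' ∈ Σⁿ` (so the global sensitivity obeys the same
bound),
`||Compress_SR(w)| − |Compress_SR(w')|| ≤ ((∛9/2)·n^(2/3) + (∛3/2)·n^(1/3) + 3)·(2⌈log₂ n⌉ + ⌈log₂ |Σ|⌉)`. -/
theorem lz77SR_global_sensitivity_upper {α : Type*} [Fintype α] (n : ℕ) :
    ∀ w w' : ℕ → α, Neighbor n w w' →
    ∀ B B' : List (LZBlock α),
      IsLZ77SRParse n w B → IsLZ77SRParse n w' B' →
      ((((B.length : ℤ) * (codeLen n (Fintype.card α) : ℤ)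
          - (B'.length : ℤ) * (codeLen n (Fintype.card α) : ℤ)).natAbs : ℝ))
        ≤ ((9 : ℝ) ^ ((1 : ℝ) / 3) / 2 * (n : ℝ) ^ ((2 : ℝ) / 3)
            + (3 : ℝ) ^ ((1 : ℝ) / 3) / 2 * (n : ℝ) ^ ((1 : ℝ) / 3) + 3)
          * (codeLen n (Fintype.card α) : ℝ) := by
  intro w w' hnb B B' hB hB'
  obtain ⟨j, hj1, hjn, -, hdiff⟩ := hnb
  have h1 := LZaux.t'_le n w w' j hj1 hjn hdiff B B' hB hB'
  have h2 := LZaux.t'_le n w' w j hj1 hjn (fun x hx => (hdiff x hx).symm) B' B hB' hB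
  set c : ℕ := codeLen n (Fintype.card α) with hc
  set A : ℝ := (9:ℝ)^((1:ℝ)/3)/2 * (n:ℝ)^((2:ℝ)/3) with hA
  set Bb : ℝ := (3:ℝ)^((1:ℝ)/3)/2 * (n:ℝ)^((1:ℝ)/3) with hBb
  have hfact : ((B.length : ℤ) * c - (B'.length : ℤ) * c)
      = ((B.length : ℤ) - B'.length) * c := by ring
  rw [hfact, Int.natAbs_mul]
  have hcnn : (0:ℝ) ≤ (c:ℝ) := Nat.cast_nonneg _
  have habs : ((((B.length : ℤ) - (B'.length : ℤ)).natAbs : ℕ) : ℝ) ≤ A + Bb + 1 := by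
    rw [Nat.cast_natAbs]
    push_cast
    rw [abs_le]
    constructor <;> linarith
  push_cast [Int.natAbs_natCast]
  calc (((B.length : ℤ) - (B'.length : ℤ)).natAbs : ℝ) * c ≤ (A + Bb + 1) * c :=
        mul_le_mul_of_nonneg_right habs hcnn
    _ ≤ (A + Bb + 3) * c := mul_le_mul_of_nonneg_right (by linarith) hcnn
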